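/- Let G = (V, E) be a finite directed acyclic graph and let (i,j) ∈ E be an edge whose target j is not a sink and which lies on at least one directed path from a source of G to a sink of G. Let G' be the graph obtained from G by front elimination of (i,j) (the insertion of the structural fill edges (i,k) for all successors k of j for which (i,k) ∉ E, removal of (i,j), and removal of j with its outgoing edges if j loses all incoming edges). Then the quantity Σ_π length(π), where π ranges over all directed paths from a source to a sink and length(π) is the number of edges of π, strictly decreases from G to G'. Consequently, every sequence of edge eliminations terminates after finitely many steps. -/

import Mathlib

open scoped Classical

/-- Adjacency after (structural) front elimination of the edge `(i,j)`: for every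
successor `k` of `j` the edge `(i,k)` is inserted if not already present, the edge
`(i,j)` is removed, and if `j` thereby has no incoming edges left, `j` is removed
(isolated) together with its outgoing edges. -/
def frontAdj {V : Type*} [Fintype V] [DecidableEq V] (A : V → V → Bool) (i j : V) :
    V → V → Bool :=
  fun x y =>
    let A1 : V → V → Bool := fun x y =>
      if x = i ∧ y = j then false else (A x y || (decide (x = i) && A j y))
    if ∀ u, u ≠ i → A u j = false then
      (A1 x y && !decide (x = j) && !decide (y = j))
    else A1 x y

/-- The 0/1 adjacency matrix over `ℕ`; the entry `(natAdj A ^ k) s t` counts the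
directed walks (in a dag: the directed paths) of length `k` from `s` to `t`. -/
def natAdj {V : Type*} [Fintype V] (A : V → V → Bool) : Matrix V V ℕ :=
  fun x y => if A x y then 1 else 0

/-- `Σ_π length(π)`, where `π` ranges over all directed paths from a source to a sink
and `length(π)` is the number of edges of `π`; counted as
`Σ_k k · #{source-to-sink paths of length k}` (in a dag all paths have length
`< card V`). -/
def lengthMeasure {V : Type*} [Fintype V] [DecidableEq V] (A : V → V → Bool) : ℕ :=
  ∑ k ∈ Finset.Icc 1 (Fintype.card V), k *
    ∑ s ∈ Finset.univ.filter (fun s : V => ∀ u, A u s = false),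
      ∑ t ∈ Finset.univ.filter (fun t : V => ∀ w, A t w = false),
        (natAdj A ^ k) s t

/-- An edge-elimination step: front elimination of an edge `(i,j)` whose target is
not a sink and which lies on at least one directed path from a source to a sink. -/
def FrontStep {V : Type*} [Fintype V] [DecidableEq V] (A B : V → V → Bool) : Prop :=
  ∃ i j : V, A i j = true ∧ (∃ k, A j k = true) ∧
    (∃ s t : V, (∀ u, A u s = false) ∧ (∀ w, A t w = false) ∧
      Relation.ReflTransGen (fun a b => A a b = true) s i ∧
      Relation.ReflTransGen (fun a b => A a b = true) j t) ∧
    B = frontAdj A i j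

/-! ### Auxiliary development: counting source-to-sink walks by lists -/

section Walks
variable {V : Type*} [Fintype V] [DecidableEq V]

lemma getLast?_cons_ne {α : Type*} {x : α} {l : List α} (h : l ≠ []) :
    (x :: l).getLast? = l.getLast? := by
  cases l with
  | nil => exact absurd rfl h
  | cons a l' => simp [List.getLast?_cons_cons]

/-- The finset of walks with `k` edges from `s` to `t` (as lists of `k+1` vertices). -/
def walks (A : V → V → Bool) : ℕ → V → V → Finset (List V)
  | 0, s, t => if s = t then {[s]} else ∅
  | (k+1), s, t => Finset.univ.biUnion fun u =>
      if A s u = true then ((walks A k u t).image (s :: ·)) else ∅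

lemma mem_walks {A : V → V → Bool} {k : ℕ} {s t : V} {l : List V} :
    l ∈ walks A k s t ↔
      l.length = k + 1 ∧ l.head? = some s ∧ l.getLast? = some t ∧
        l.Chain' (fun a b => A a b = true) := by
  induction k generalizing s l with
  | zero =>
      simp only [walks]
      constructor
      · intro h
        split at h
        · subst ‹s = t›; simp at h; subst h; simp; exact List.isChain_singleton _
        · simp at h
      · rintro ⟨h1, h2, h3, h4⟩
        match l, h1 with
        | [x], _ =>
          simp at h2 h3; subst h2; subst h3; simp
  | succ k ih =>
      simp only [walks, Finset.mem_biUnion, Finset.mem_univ, true_and]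
      constructor
      · rintro ⟨u, hu⟩
        split at hu
        · rename_i hAsu
          simp only [Finset.mem_image] at hu
          obtain ⟨l', hl', rfl⟩ := hu
          obtain ⟨h1, h2, h3, h4⟩ := ih.mp hl'
          have hne : l' ≠ [] := by intro h; simp [h] at h1
          refine ⟨by simp [h1], by simp, by rwa [getLast?_cons_ne hne], ?_⟩
          · unfold List.Chain'; rw [List.isChain_cons]
            exact ⟨fun y hy => by rw [h2] at hy; simp at hy; subst hy; exact hAsu, h4⟩
        · simp at hu
      · rintro ⟨h1, h2, h3, h4⟩
        match l with
        | x :: l' =>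
          have hx : x = s := by simpa using h2
          have hne : l' ≠ [] := by intro h; rw [h] at h1; simp at h1
          unfold List.Chain' at h4; rw [List.isChain_cons] at h4
          obtain ⟨hfst, hch⟩ := h4
          obtain ⟨u, hu⟩ : ∃ u, l'.head? = some u := by
            cases l' with
            | nil => exact absurd rfl hne
            | cons a l'' => exact ⟨a, rfl⟩
          refine ⟨u, ?_⟩
          have hAsu : A s u = true := by rw [← hx]; exact hfst u hu
          rw [if_pos hAsu]
          simp only [Finset.mem_image]
          refine ⟨l', ih.mpr ⟨by simpa using h1, hu, by
            rwa [getLast?_cons_ne hne] at h3, hch⟩, by rw [hx]⟩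

lemma card_walks (A : V → V → Bool) (k : ℕ) (s t : V) :
    (natAdj A ^ k) s t = (walks A k s t).card := by
  induction k generalizing s with
  | zero =>
      simp only [pow_zero, Matrix.one_apply, walks]
      split <;> simp
  | succ k ih =>
      rw [pow_succ', Matrix.mul_apply]
      show _ = (Finset.univ.biUnion fun u =>
        if A s u = true then ((walks A k u t).image (s :: ·)) else ∅).card
      rw [Finset.card_biUnion]
      · refine Finset.sum_congr rfl fun u _ => ?_
        by_cases h : A s u = true
        · simp [h, natAdj, ih, Finset.card_image_of_injective _ (List.cons_injective)]
        · simp [natAdj, h]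
      · intro u _ v _ huv
        simp only [Function.onFun]; rw [Finset.disjoint_left]
        intro l hl hl'
        apply huv
        split at hl
        · split at hl'
          · simp only [Finset.mem_image] at hl hl'
            obtain ⟨l1, hl1, rfl⟩ := hl
            obtain ⟨l2, hl2, heq⟩ := hl'
            have h1 := (mem_walks.mp hl1).2.1
            have h2 := (mem_walks.mp hl2).2.1
            have heq2 : l1 = l2 := by injection heq with _ h; exact h.symm
            subst heq2
            rw [h1] at h2; injection h2
          · simp at hl'
        · simp at hl

/-- the sources of `A` -/
def srcsF (A : V → V → Bool) : Finset V :=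
  Finset.univ.filter (fun s : V => ∀ u, A u s = false)
/-- the sinks of `A` -/
def sinksF (A : V → V → Bool) : Finset V :=
  Finset.univ.filter (fun t : V => ∀ w, A t w = false)

/-- all source-to-sink walks with at least one and at most `card V` edges -/
def allWalks (A : V → V → Bool) : Finset (List V) :=
  (Finset.Icc 1 (Fintype.card V)).biUnion fun k =>
    (srcsF A).biUnion fun s => (sinksF A).biUnion fun t => walks A k s t

lemma mem_allWalks {A : V → V → Bool} {l : List V} :
    l ∈ allWalks A ↔ ∃ k ∈ Finset.Icc 1 (Fintype.card V), ∃ s ∈ srcsF A,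
      ∃ t ∈ sinksF A, l ∈ walks A k s t := by
  simp [allWalks]

lemma lengthMeasure_eq (A : V → V → Bool) :
    lengthMeasure A = ∑ l ∈ allWalks A, (l.length - 1) := by
  rw [allWalks, Finset.sum_biUnion]
  · rw [lengthMeasure]
    refine Finset.sum_congr rfl fun k _ => ?_
    rw [Finset.sum_biUnion]
    · rw [Finset.mul_sum]
      refine Finset.sum_congr rfl fun s _ => ?_
      rw [Finset.sum_biUnion]
      · rw [Finset.mul_sum]
        refine Finset.sum_congr rfl fun t _ => ?_
        rw [card_walks]
        calc k * (walks A k s t).card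
            = ∑ _l ∈ walks A k s t, k := by rw [Finset.sum_const, smul_eq_mul, mul_comm]
          _ = ∑ l ∈ walks A k s t, (l.length - 1) :=
              Finset.sum_congr rfl fun l hl => by rw [(mem_walks.mp hl).1]; simp
      · intro t1 h1 t2 h2 hne
        simp only [Function.onFun]
        rw [Finset.disjoint_left]
        intro l hl hl'
        have e1 := (mem_walks.mp hl).2.2.1
        have e2 := (mem_walks.mp hl').2.2.1
        rw [e1] at e2; exact hne (by injection e2)
    · intro s1 h1 s2 h2 hne
      simp only [Function.onFun]
      rw [Finset.disjoint_left]
      intro l hl hl'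
      simp only [Finset.mem_biUnion] at hl hl'
      obtain ⟨t1, _, hl⟩ := hl
      obtain ⟨t2, _, hl'⟩ := hl'
      have e1 := (mem_walks.mp hl).2.1
      have e2 := (mem_walks.mp hl').2.1
      rw [e1] at e2; exact hne (by injection e2)
  · intro k1 h1 k2 h2 hne
    simp only [Function.onFun]
    rw [Finset.disjoint_left]
    intro l hl hl'
    simp only [Finset.mem_biUnion] at hl hl'
    obtain ⟨s1, _, t1, _, hl⟩ := hl
    obtain ⟨s2, _, t2, _, hl'⟩ := hl'
    have e1 := (mem_walks.mp hl).1
    have e2 := (mem_walks.mp hl').1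
    rw [e1] at e2
    exact hne (by omega)

lemma chain_pairwise {g : V → V → Bool} {f : V → ℕ}
    (h : ∀ a b, g a b = true → f a < f b) {l : List V}
    (hc : l.Chain' (fun a b => g a b = true)) :
    l.Pairwise (fun a b => f a < f b) := by
  haveI : IsTrans V fun a b => f a < f b := ⟨fun a b c h1 h2 => lt_trans h1 h2⟩
  exact List.isChain_iff_pairwise.mp (List.IsChain.imp (fun a b hab => h a b hab) hc)

lemma chain_length_le {g : V → V → Bool} {f : V → ℕ}
    (h : ∀ a b, g a b = true → f a < f b) {l : List V}
    (hc : l.Chain' (fun a b => g a b = true)) : l.length ≤ Fintype.card V := by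
  have hp := chain_pairwise h hc
  have hnd : l.Nodup := by
    refine hp.imp ?_
    intro a b hab he
    rw [he] at hab; exact lt_irrefl _ hab
  exact hnd.length_le_card

lemma mem_allWalks_of {A : V → V → Bool} {f : V → ℕ}
    (hacyc : ∀ a b, A a b = true → f a < f b) {l : List V} {s t : V}
    (h2 : l.head? = some s) (h3 : l.getLast? = some t)
    (hc : l.Chain' (fun a b => A a b = true)) (hlen : 2 ≤ l.length)
    (hs : ∀ u, A u s = false) (ht : ∀ w, A t w = false) : l ∈ allWalks A := by
  have hle := chain_length_le hacyc hc
  refine mem_allWalks.mpr ⟨l.length - 1, ?_, s, ?_, t, ?_, mem_walks.mpr ⟨by omega, h2, h3, hc⟩⟩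
  · rw [Finset.mem_Icc]; omega
  · simp [srcsF, hs]
  · simp [sinksF, ht]

lemma exists_out {g : V → V → Bool} {l : List V} {s : V} (h2 : l.head? = some s)
    (hlen : 2 ≤ l.length) (hc : l.Chain' (fun a b => g a b = true)) :
    ∃ w, g s w = true := by
  match l, hlen with
  | x :: y :: r, _ =>
    have hx : x = s := by simpa using h2
    unfold List.Chain' at hc; rw [List.isChain_cons_cons] at hc
    exact ⟨y, hx ▸ hc.1⟩

lemma exists_in {g : V → V → Bool} {l : List V} {t : V} (h3 : l.getLast? = some t)
    (hlen : 2 ≤ l.length) (hc : l.Chain' (fun a b => g a b = true)) :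
    ∃ u, g u t = true := by
  induction l with
  | nil => simp at hlen
  | cons x r ih =>
    cases r with
    | nil => simp at hlen
    | cons y r' =>
      unfold List.Chain' at hc; rw [List.isChain_cons_cons] at hc
      cases r' with
      | nil =>
        have ht : y = t := by simpa [List.getLast?_cons_cons] using h3
        exact ⟨x, ht ▸ hc.1⟩
      | cons z r'' =>
        exact ih (by simpa [List.getLast?_cons_cons] using h3) (by simp) hc.2
end Walks

/-! ### The insertion and deletion maps on lists -/

section Ins
variable {V : Type*} [DecidableEq V]
variable (A : V → V → Bool) (i j : V)

/-- Insert `j` after `i` where the walk uses a fill edge out of `i`. -/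
def insJ : List V → List V
  | x :: y :: rest => if x = i ∧ A i y = false then x :: j :: y :: rest
                      else x :: insJ (y :: rest)
  | l => l

/-- The (one-sided) inverse of `insJ`. -/
def delJ : List V → List V
  | x :: y :: z :: rest => if x = i ∧ y = j ∧ A i z = false then x :: z :: rest
                           else x :: delJ (y :: z :: rest)
  | l => l

variable {A i j}

lemma insJ_head? (l : List V) : (insJ A i j l).head? = l.head? := by
  match l with
  | [] => rfl
  | [x] => rfl
  | x :: y :: rest =>
    rw [insJ]
    split <;> rfl

lemma insJ_getLast? (l : List V) : (insJ A i j l).getLast? = l.getLast? := by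
  induction l with
  | nil => rfl
  | cons x t ih =>
    cases t with
    | nil => rfl
    | cons y rest =>
      rw [insJ]
      split
      · simp [List.getLast?_cons_cons]
      · rw [List.getLast?_cons_cons, ← ih]
        have hne : insJ A i j (y :: rest) ≠ [] := by
          intro h
          have := insJ_head? (A := A) (i := i) (j := j) (y :: rest)
          rw [h] at this; simp at this
        cases hE : insJ A i j (y :: rest) with
        | nil => exact absurd hE hne
        | cons a m => simp [List.getLast?_cons_cons]

lemma insJ_length (l : List V) :
    l.length ≤ (insJ A i j l).length ∧ (insJ A i j l).length ≤ l.length + 1 := by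
  induction l with
  | nil => simp [insJ]
  | cons x t ih =>
    cases t with
    | nil => simp [insJ]
    | cons y rest =>
      rw [insJ]
      split
      · simp
      · simp only [List.length_cons] at ih ⊢
        omega

variable {B : V → V → Bool}
  (hB : ∀ x y, B x y = true → A x y = true ∨ (x = i ∧ A j y = true))
  (hBij : B i j = false)

include hB hBij in
lemma delJ_insJ {l : List V} (hch : l.Chain' (fun a b => B a b = true)) :
    delJ A i j (insJ A i j l) = l := by
  induction l with
  | nil => rfl
  | cons x t ih =>
    cases t with
    | nil => rfl
    | cons y rest =>
      unfold List.Chain' at hch; rw [List.isChain_cons_cons] at hch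
      obtain ⟨hxy, hch'⟩ := hch
      have hnotij : ¬(x = i ∧ y = j) := by
        rintro ⟨rfl, rfl⟩
        rw [hBij] at hxy; exact absurd hxy (by simp)
      rw [insJ]
      split
      · rename_i hcond
        rw [delJ]
        rw [if_pos ⟨hcond.1, rfl, hcond.2⟩]
      · -- else branch
        have hm := ih hch'
        have hhead := insJ_head? (A := A) (i := i) (j := j) (y :: rest)
        cases hE : insJ A i j (y :: rest) with
        | nil => rw [hE] at hhead; simp at hhead
        | cons a m =>
          rw [hE] at hhead hm
          have ha : a = y := by simpa using hhead
          cases m with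
          | nil =>
            have hm2 : y :: rest = [a] := by rw [← hm]; rfl
            show delJ A i j [x, a] = x :: y :: rest
            rw [hm2]
            rfl
          | cons b m' =>
            rw [delJ]
            rw [if_neg (by rintro ⟨h1, h2, _⟩; exact hnotij ⟨h1, ha ▸ h2⟩)]
            exact congrArg (x :: ·) hm

include hB in
lemma chain_of_no_i {m : List V} (hch : m.Chain' (fun a b => B a b = true))
    (hni : i ∉ m) : m.Chain' (fun a b => A a b = true) := by
  induction m with
  | nil => exact List.isChain_nil
  | cons x t ih =>
    cases t with
    | nil => exact List.isChain_singleton _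
    | cons y rest =>
      unfold List.Chain' at hch ⊢; rw [List.isChain_cons_cons] at hch ⊢
      obtain ⟨hxy, hch'⟩ := hch
      refine ⟨?_, ih hch' (fun h => hni (List.mem_cons_of_mem _ h))⟩
      rcases hB _ _ hxy with h | ⟨rfl, _⟩
      · exact h
      · exact absurd List.mem_cons_self hni

include hB hBij in
lemma insJ_chain {f : V → ℕ} (hf : ∀ a b, f a < f b → a ≠ b) (hij : A i j = true)
    {l : List V}
    (hch : l.Chain' (fun a b => B a b = true))
    (hpw : l.Pairwise (fun a b => f a < f b)) :
    (insJ A i j l).Chain' (fun a b => A a b = true) := by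
  induction l with
  | nil => exact List.isChain_nil
  | cons x t ih =>
    cases t with
    | nil => simp [insJ]; exact List.isChain_singleton _
    | cons y rest =>
      unfold List.Chain' at hch; rw [List.isChain_cons_cons] at hch
      obtain ⟨hxy, hch'⟩ := hch
      rw [List.pairwise_cons] at hpw
      obtain ⟨hpx, hpw'⟩ := hpw
      rw [insJ]
      split
      · rename_i hcond
        obtain ⟨rfl, hAiyF⟩ := hcond
        have hAjy : A j y = true := by
          rcases hB _ _ hxy with h | ⟨_, h⟩
          · rw [h] at hAiyF; exact absurd hAiyF (by simp)
          · exact h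
        unfold List.Chain'; rw [List.isChain_cons_cons, List.isChain_cons_cons]
        refine ⟨hij, hAjy, ?_⟩
        refine chain_of_no_i hB hch' ?_
        intro hmem
        exact hf _ _ (hpx _ hmem) rfl
      · unfold List.Chain'; rw [List.isChain_cons]
        refine ⟨?_, ih hch' hpw'⟩
        intro z hz
        rw [insJ_head? (A := A) (i := i) (j := j) (y :: rest)] at hz
        simp at hz
        subst hz
        rcases hB _ _ hxy with h | ⟨rfl, h⟩
        · exact h
        · rename_i hcond
          push_neg at hcond
          simpa using hcond rfl

include hBij in
lemma insJ_length_of_infix {l : List V}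
    (hch : l.Chain' (fun a b => B a b = true))
    (hinf : [i, j] <:+: insJ A i j l) :
    (insJ A i j l).length = l.length + 1 := by
  induction l with
  | nil =>
    obtain ⟨r1, r2, he⟩ := hinf
    have h0 : (r1 ++ [i, j] ++ r2).length = (0 : ℕ) := by rw [he]; rfl
    simp only [List.length_append, List.length_cons, List.length_nil] at h0
    omega
  | cons x t ih =>
    cases t with
    | nil =>
      obtain ⟨r1, r2, he⟩ := hinf
      have hlen : (r1 ++ [i, j] ++ r2).length = ([x] : List V).length := by
        rw [he]; rfl
      simp only [List.length_append, List.length_cons, List.length_nil] at hlen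
      omega
    | cons y rest =>
      unfold List.Chain' at hch; rw [List.isChain_cons_cons] at hch
      obtain ⟨hxy, hch'⟩ := hch
      rw [insJ] at hinf ⊢
      split at hinf
      · rename_i hcond
        rw [if_pos hcond]
        simp
      · rename_i hcond
        rw [if_neg hcond]
        obtain ⟨r1, r2, he⟩ := hinf
        cases r1 with
        | nil =>
          rw [List.nil_append] at he
          have hx : i = x := by injection he
          have htl : j :: r2 = insJ A i j (y :: rest) := by
            injection he with _ h
          have hy : y = j := by
            have h2 := congrArg List.head? htl
            rw [insJ_head? (A := A) (i := i) (j := j) (y :: rest)] at h2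
            simpa using h2.symm
          rw [← hx, hy] at hxy
          rw [hBij] at hxy
          exact absurd hxy (by simp)
        | cons a r1' =>
          have he' : insJ A i j (y :: rest) = r1' ++ [i, j] ++ r2 := by
            have := congrArg List.tail he
            simpa using this.symm
          have hlen := ih hch' ⟨r1', r2, he'.symm⟩
          simp only [List.length_cons] at hlen ⊢
          omega
end Ins

/-! ### Structural facts about `frontAdj` -/

section FA
variable {V : Type*} [Fintype V] [DecidableEq V]
variable {A : V → V → Bool} {f : V → ℕ} {i j : V}

lemma frontAdj_true {x y : V} (h : frontAdj A i j x y = true) :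
    A x y = true ∨ (x = i ∧ A j y = true ∧ ¬(x = i ∧ y = j)) := by
  unfold frontAdj at h
  simp only [] at h
  split at h
  · simp only [Bool.and_eq_true, Bool.not_eq_true'] at h
    obtain ⟨⟨h1, _⟩, _⟩ := h
    split at h1
    · exact absurd h1 (by simp)
    · rename_i hc
      simp only [Bool.or_eq_true, Bool.and_eq_true, decide_eq_true_eq] at h1
      rcases h1 with h1 | ⟨rfl, h1⟩
      · exact Or.inl h1
      · exact Or.inr ⟨rfl, h1, hc⟩
  · split at h
    · exact absurd h (by simp)
    · rename_i hc
      simp only [Bool.or_eq_true, Bool.and_eq_true, decide_eq_true_eq] at h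
      rcases h with h1 | ⟨rfl, h1⟩
      · exact Or.inl h1
      · exact Or.inr ⟨rfl, h1, hc⟩

variable (hacyc : ∀ a b, A a b = true → f a < f b) (hij : A i j = true)
include hacyc hij

lemma frontAdj_potential {a b : V} (h : frontAdj A i j a b = true) : f a < f b := by
  rcases frontAdj_true h with h1 | ⟨rfl, h1, _⟩
  · exact hacyc _ _ h1
  · exact lt_trans (hacyc _ _ hij) (hacyc _ _ h1)

omit hacyc hij in
lemma frontAdj_ij : frontAdj A i j i j = false := by
  unfold frontAdj
  simp only []
  split <;> simp

lemma frontAdj_i_succ {k : V} (hk : A j k = true) : frontAdj A i j i k = true := by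
  have hkj : k ≠ j := fun h => absurd (hacyc j k hk) (by rw [h]; simp)
  have hijne : i ≠ j := fun h => absurd (hacyc i j hij) (by rw [h]; simp)
  unfold frontAdj
  simp only []
  split
  · simp [hkj, hijne, hk]
  · simp [hkj, hk]

/-- a vertex with outgoing edges in `frontAdj` that is a source there is a source in `A` -/
lemma src_transfer {s : V} (hsrc : ∀ u, frontAdj A i j u s = false)
    (hout : ∃ w, frontAdj A i j s w = true) : ∀ u, A u s = false := by
  by_contra hcon
  push_neg at hcon
  obtain ⟨u, hu⟩ := hcon
  replace hu : A u s = true := by simpa using hu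
  have hijne : i ≠ j := fun h => absurd (hacyc i j hij) (by rw [h]; simp)
  by_cases hsj : s = j
  · by_cases hc : ∀ u, u ≠ i → A u j = false
    · -- j removed: no outgoing edges, contradiction with hout
      obtain ⟨w, hw⟩ := hout
      unfold frontAdj at hw
      rw [if_pos hc] at hw
      simp [hsj] at hw
    · push_neg at hc
      obtain ⟨u0, hu0i, hu0⟩ := hc
      replace hu0 : A u0 j = true := by simpa using hu0
      have hend : frontAdj A i j u0 s = true := by
        have hpair : ¬(u0 = i ∧ s = j) := by rintro ⟨h, _⟩; exact hu0i h
        unfold frontAdj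
        simp only []
        rw [if_neg (by push_neg; exact ⟨u0, hu0i, by simpa using hu0⟩)]
        rw [if_neg hpair]
        simp [hsj, hu0]
      rw [hsrc u0] at hend; exact absurd hend (by simp)
  · -- s ≠ j
    by_cases huj : u = j
    · -- s is a successor of j, so (i,s) is an edge of frontAdj
      have hend := frontAdj_i_succ hacyc hij (huj ▸ hu)
      rw [hsrc i] at hend; exact absurd hend (by simp)
    · have hend : frontAdj A i j u s = true := by
        have hpair : ¬(u = i ∧ s = j) := by rintro ⟨_, h⟩; exact hsj h
        unfold frontAdj
        simp only []
        split
        · simp [hpair, hu, huj, hsj]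
        · simp [hpair, hu]
      rw [hsrc u] at hend; exact absurd hend (by simp)

lemma sink_transfer (hnotsink : ∃ k, A j k = true) {t : V}
    (hsink : ∀ w, frontAdj A i j t w = false)
    (hin : ∃ u, frontAdj A i j u t = true) : ∀ w, A t w = false := by
  by_contra hcon
  push_neg at hcon
  obtain ⟨w, hw⟩ := hcon
  replace hw : A t w = true := by simpa using hw
  have hijne : i ≠ j := fun h => absurd (hacyc i j hij) (by rw [h]; simp)
  by_cases htj : t = j
  · by_cases hc : ∀ u, u ≠ i → A u j = false
    · obtain ⟨u, hu⟩ := hin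
      unfold frontAdj at hu
      rw [if_pos hc] at hu
      simp [htj] at hu
    · have hend : frontAdj A i j t w = true := by
        have hpair : ¬(t = i ∧ w = j) := by
          rintro ⟨h, _⟩; exact hijne (by rw [← h]; exact htj)
        unfold frontAdj
        simp only []
        rw [if_neg hc, if_neg hpair]
        simp [hw]
      rw [hsink w] at hend; exact absurd hend (by simp)
  · by_cases hwj : w = j
    · by_cases hti : t = i
      · obtain ⟨k, hk⟩ := hnotsink
        have hend := frontAdj_i_succ hacyc hij hk
        have hs2 := hsink k
        rw [hti] at hs2
        rw [hs2] at hend; exact absurd hend (by simp)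
      · have hc : ¬ ∀ u, u ≠ i → A u j = false := by
          push_neg
          exact ⟨t, hti, by simp [hwj ▸ hw]⟩
        have hend : frontAdj A i j t w = true := by
          have hpair : ¬(t = i ∧ w = j) := by rintro ⟨h, _⟩; exact hti h
          unfold frontAdj
          simp only []
          rw [if_neg hc, if_neg hpair]
          simp [hw]
        rw [hsink w] at hend; exact absurd hend (by simp)
    · have hend : frontAdj A i j t w = true := by
        have hpair : ¬(t = i ∧ w = j) := by rintro ⟨_, h⟩; exact hwj h
        unfold frontAdj
        simp only []
        split
        · simp [hpair, hw, htj, hwj]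
        · simp [hpair, hw]
      rw [hsink w] at hend; exact absurd hend (by simp)
end FA

/-! ### A sum-comparison principle for injections -/

lemma sum_lt_sum_inj {α : Type*} [DecidableEq α] (S T : Finset α) (Φ : α → α) (w : α → ℕ)
    (hmap : ∀ l ∈ S, Φ l ∈ T)
    (hinj : ∀ x ∈ S, ∀ y ∈ S, Φ x = Φ y → x = y)
    (hle : ∀ l ∈ S, w l ≤ w (Φ l))
    (W : α) (hW : W ∈ T) (hpos : 0 < w W)
    (hstrict : ∀ l ∈ S, Φ l = W → w l < w W) :
    ∑ l ∈ S, w l < ∑ l ∈ T, w l := by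
  have himg : S.image Φ ⊆ T := by
    intro x hx
    simp only [Finset.mem_image] at hx
    obtain ⟨a, ha, rfl⟩ := hx
    exact hmap a ha
  by_cases hex : ∃ l ∈ S, Φ l = W
  · obtain ⟨l0, hl0, hl0W⟩ := hex
    calc ∑ l ∈ S, w l < ∑ l ∈ S, w (Φ l) :=
        Finset.sum_lt_sum hle ⟨l0, hl0, by rw [hl0W]; exact hstrict l0 hl0 hl0W⟩
      _ = ∑ l ∈ S.image Φ, w l := (Finset.sum_image hinj).symm
      _ ≤ ∑ l ∈ T, w l := Finset.sum_le_sum_of_subset himg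
  · push_neg at hex
    calc ∑ l ∈ S, w l ≤ ∑ l ∈ S, w (Φ l) := Finset.sum_le_sum hle
      _ = ∑ l ∈ S.image Φ, w l := (Finset.sum_image hinj).symm
      _ ≤ ∑ l ∈ T.erase W, w l := by
          refine Finset.sum_le_sum_of_subset ?_
          intro x hx
          simp only [Finset.mem_image] at hx
          obtain ⟨a, ha, rfl⟩ := hx
          exact Finset.mem_erase.mpr ⟨hex a ha, hmap a ha⟩
      _ < ∑ l ∈ T, w l := by
          rw [← Finset.add_sum_erase T w hW]
          omega

lemma rtg_list {α : Type*} {r : α → α → Prop} {a b : α} (h : Relation.ReflTransGen r a b) :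
    ∃ l : List α, l.head? = some a ∧ l.getLast? = some b ∧ l.Chain' r := by
  induction h with
  | refl => exact ⟨[a], rfl, rfl, List.isChain_singleton _⟩
  | @tail b' c hab hbc ih =>
    obtain ⟨l, h1, h2, h3⟩ := ih
    have hne : l ≠ [] := by intro h; rw [h] at h1; simp at h1
    refine ⟨l ++ [c], ?_, List.getLast?_concat, ?_⟩
    · rw [List.head?_append, h1]; rfl
    · unfold List.Chain'; rw [List.isChain_append]
      refine ⟨h3, by simp, ?_⟩
      intro x hx y hy
      rw [h2] at hx
      simp at hx hy
      rw [← hx, ← hy]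
      exact hbc

/-! ### The strict decrease of the measure -/

theorem frontAdj_measure_lt {V : Type*} [Fintype V] [DecidableEq V]
    (A : V → V → Bool)
    (f : V → ℕ) (hacyc : ∀ a b, A a b = true → f a < f b)
    (i j : V) (hij : A i j = true) (hnotsink : ∃ k, A j k = true)
    (honpath : ∃ s t : V, (∀ u, A u s = false) ∧ (∀ w, A t w = false) ∧
      Relation.ReflTransGen (fun a b => A a b = true) s i ∧
      Relation.ReflTransGen (fun a b => A a b = true) j t) :
    lengthMeasure (frontAdj A i j) < lengthMeasure A := by
  classical
  set B := frontAdj A i j with hBdef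
  have hB : ∀ x y, B x y = true → A x y = true ∨ (x = i ∧ A j y = true) :=
    fun x y h => (frontAdj_true h).imp id (fun h' => ⟨h'.1, h'.2.1⟩)
  have hBij : B i j = false := frontAdj_ij
  have hBacyc : ∀ a b, B a b = true → f a < f b :=
    fun a b h => frontAdj_potential hacyc hij h
  have hfne : ∀ a b : V, f a < f b → a ≠ b :=
    fun a b h he => by rw [he] at h; exact lt_irrefl _ h
  rw [lengthMeasure_eq, lengthMeasure_eq]
  -- facts about members of `allWalks B`
  have hSfacts : ∀ l ∈ allWalks B, 2 ≤ l.length ∧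
      l.Chain' (fun a b => B a b = true) ∧ insJ A i j l ∈ allWalks A := by
    intro l hl
    obtain ⟨k, hk, s', hs', t', ht', hw⟩ := mem_allWalks.mp hl
    obtain ⟨hw1, hw2, hw3, hw4⟩ := mem_walks.mp hw
    rw [Finset.mem_Icc] at hk
    have hlen2 : 2 ≤ l.length := by omega
    have hs'src : ∀ u, B u s' = false := by
      simpa [srcsF] using hs'
    have ht'sink : ∀ w, B t' w = false := by
      simpa [sinksF] using ht'
    refine ⟨hlen2, hw4, ?_⟩
    -- the image walk
    have hchA : (insJ A i j l).Chain' (fun a b => A a b = true) :=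
      insJ_chain hB hBij hfne hij hw4 (chain_pairwise hBacyc hw4)
    have hsA : ∀ u, A u s' = false :=
      src_transfer hacyc hij hs'src (exists_out hw2 hlen2 hw4)
    have htA : ∀ w, A t' w = false :=
      sink_transfer hacyc hij hnotsink ht'sink (exists_in hw3 hlen2 hw4)
    refine mem_allWalks_of hacyc ?_ ?_ hchA ?_ hsA htA
    · rw [insJ_head?]; exact hw2
    · rw [insJ_getLast?]; exact hw3
    · have := (insJ_length (A := A) (i := i) (j := j) l).1
      omega
  -- the witness walk through the edge (i,j)
  obtain ⟨s, t, hs, ht, hsi, hjt⟩ := honpath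
  obtain ⟨l1, l1h, l1l, l1c⟩ := rtg_list hsi
  obtain ⟨l2, l2h, l2l, l2c⟩ := rtg_list hjt
  have l1ne : l1 ≠ [] := by intro h; rw [h] at l1h; simp at l1h
  have l2ne : l2 ≠ [] := by intro h; rw [h] at l2h; simp at l2h
  obtain ⟨W, hWdef⟩ : ∃ W : List V, W = l1 ++ l2 := ⟨_, rfl⟩
  have hWch : W.Chain' (fun a b => A a b = true) := by
    rw [hWdef]; unfold List.Chain'; rw [List.isChain_append]
    refine ⟨l1c, l2c, fun x hx y hy => ?_⟩
    rw [l1l] at hx; rw [l2h] at hy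
    simp at hx hy
    rw [← hx, ← hy]
    exact hij
  have hWhead : W.head? = some s := by
    rw [hWdef, List.head?_append, l1h]; rfl
  have hWlast : W.getLast? = some t := by
    rw [hWdef, List.getLast?_append, l2l]; rfl
  have hjt' : j ≠ t := by
    intro h
    obtain ⟨k, hk⟩ := hnotsink
    rw [h] at hk
    rw [ht k] at hk
    exact absurd hk (by simp)
  have l2len : 2 ≤ l2.length := by
    rcases l2 with _ | ⟨x, r⟩
    · exact absurd rfl l2ne
    · rcases r with _ | _
      · exfalso
        apply hjt'
        have hx : x = j := by simpa using l2h
        have hx' : x = t := by simpa using l2l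
        rw [← hx, hx']
      · simp
  have l1len : 1 ≤ l1.length := by
    rcases l1 with _ | _
    · exact absurd rfl l1ne
    · simp
  have hWlen : 3 ≤ W.length := by
    rw [hWdef, List.length_append]; omega
  have hWlen2 : 2 ≤ W.length := by omega
  have hWmem : W ∈ allWalks A :=
    mem_allWalks_of hacyc hWhead hWlast hWch hWlen2 hs ht
  -- W contains [i, j] as an infix
  have hWinf : [i, j] <:+: W := by
    refine ⟨l1.dropLast, l2.tail, ?_⟩
    have e1 : l1.dropLast ++ [i] = l1 := by
      have : l1.getLast l1ne = i := by
        have := List.getLast?_eq_getLast l1ne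
        rw [l1l] at this
        exact (Option.some_injective _ this).symm
      rw [← this]
      exact List.dropLast_append_getLast l1ne
    have e2 : l2 = j :: l2.tail := List.eq_cons_of_mem_head? (by rw [l2h]; rfl)
    rw [hWdef]
    calc l1.dropLast ++ [i, j] ++ l2.tail
        = (l1.dropLast ++ [i]) ++ (j :: l2.tail) := by
          simp [List.append_assoc]
      _ = l1 ++ l2 := by rw [e1, ← e2]
  -- apply the sum comparison
  refine sum_lt_sum_inj (allWalks B) (allWalks A) (insJ A i j) (fun l => l.length - 1)
    (fun l hl => (hSfacts l hl).2.2)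
    (fun x hx y hy hxy => ?_) (fun l hl => ?_) W hWmem
    (by show 0 < W.length - 1; omega) (fun l hl hlW => ?_)
  · have h1 := delJ_insJ hB hBij (hSfacts x hx).2.1
    have h2 := delJ_insJ hB hBij (hSfacts y hy).2.1
    rw [← h1, ← h2, hxy]
  · exact Nat.sub_le_sub_right (insJ_length (A := A) (i := i) (j := j) l).1 1
  · have hchB := (hSfacts l hl).2.1
    have hlen2 := (hSfacts l hl).1
    have := insJ_length_of_infix hBij hchB (hlW ▸ hWinf)
    have hWl : W.length = l.length + 1 := by rw [← hlW]; exact this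
    show l.length - 1 < W.length - 1
    omega

/-- **Termination measure for edge elimination**: if `(i,j)` is an edge of a finite
dag whose target `j` is not a sink and which lies on a directed path from a source to
a sink, then `Σ_π length(π)` (over all source-to-sink paths `π`) strictly decreases
under front elimination of `(i,j)`.  Consequently, every sequence of such edge
eliminations terminates after finitely many steps: there is no infinite sequence of
consecutive elimination steps starting from `A`. -/
theorem front_elimination_measure_decreases
    {V : Type*} [Fintype V] [DecidableEq V]
    (A : V → V → Bool)
    (f : V → ℕ) (hacyc : ∀ a b, A a b = true → f a < f b)
    (i j : V) (hij : A i j = true) (hnotsink : ∃ k, A j k = true)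
    (honpath : ∃ s t : V, (∀ u, A u s = false) ∧ (∀ w, A t w = false) ∧
      Relation.ReflTransGen (fun a b => A a b = true) s i ∧
      Relation.ReflTransGen (fun a b => A a b = true) j t) :
    lengthMeasure (frontAdj A i j) < lengthMeasure A ∧
    ∀ seq : ℕ → (V → V → Bool), seq 0 = A →
      ¬ (∀ m : ℕ, FrontStep (seq m) (seq (m + 1))) := by
  constructor
  · exact frontAdj_measure_lt A f hacyc i j hij hnotsink honpath
  · intro seq h0 hstep
    have pot : ∀ m, ∀ a b, seq m a b = true → f a < f b := by
      intro m
      induction m with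
      | zero => rw [h0]; exact hacyc
      | succ m ih =>
        obtain ⟨i', j', hij', _, _, hBeq⟩ := hstep m
        rw [hBeq]
        exact fun a b h => frontAdj_potential ih hij' h
    have dec : ∀ m, lengthMeasure (seq (m + 1)) < lengthMeasure (seq m) := by
      intro m
      obtain ⟨i', j', hij', hns', hop', hBeq⟩ := hstep m
      rw [hBeq]
      exact frontAdj_measure_lt _ f (pot m) _ _ hij' hns' hop'
    have bound : ∀ m, lengthMeasure (seq m) + m ≤ lengthMeasure (seq 0) := by
      intro m
      induction m with
      | zero => simp
      | succ m ih =>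
        have := dec m
        omega
    have := bound (lengthMeasure (seq 0) + 1)
    omega
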